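/- arXiv:1910.12402 — 2 statements merged into one kernel-verified Lean document; each statement's English description precedes it below -/
import Mathlib

section
/- For all u, v in Λ³(ℂ⁹), the linear endomorphism u × v of ℂ⁹ defined by (u × v)x = *(v ∧ *(u ∧ x)) + (2/3)(u,v)x has trace zero. -/
open scoped BigOperators
open Matrix

noncomputable section

/-- Index type for a basis of `Λᵏ(ℂ⁹)`: subsets of `Fin 9` of cardinality `k`. -/
abbrev Idx (k : ℕ) : Type := {s : Finset (Fin 9) // s.card = k}

/-- `Λᵏ(ℂ⁹)` in coordinates with respect to the basis `e_{i₁} ∧ ⋯ ∧ e_{i_k}`, `i₁ < ⋯ < i_k`. -/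
abbrev Lam (k : ℕ) : Type := Idx k → ℂ

/-- Sign obtained when sorting the increasing enumeration of `s` followed by that of `t`. -/
def sgn (s t : Finset (Fin 9)) : ℂ :=
  (-1 : ℂ) ^ (∑ i ∈ s, (t.filter (fun j => j < i)).card)

/-- Wedge product `Λᵏ × Λˡ → Λ^{k+l}`. -/
def wedge {k l : ℕ} (u : Lam k) (v : Lam l) : Lam (k + l) := fun w =>
  ∑ s ∈ (w.1.powerset.filter fun s => s.card = k).attach,
    sgn s.1 (w.1 \ s.1) *
      u ⟨s.1, by
        have hs := s.2
        simp only [Finset.mem_filter] at hs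
        exact hs.2⟩ *
      v ⟨w.1 \ s.1, by
        have hs := s.2
        simp only [Finset.mem_filter, Finset.mem_powerset] at hs
        rw [Finset.card_sdiff_of_subset hs.1, w.2, hs.2]
        omega⟩

/-- The Hodge star operator `Λᵏ → Λˡ`, `k + l = 9`, characterized by
`(⋆u, v) = (u ∧ v, e₁ ∧ ⋯ ∧ e₉)`. -/
def hstar {k l : ℕ} (h : k + l = 9) (u : Lam k) : Lam l := fun t =>
  sgn t.1ᶜ t.1 *
    u ⟨t.1ᶜ, by
      rw [Finset.card_compl, t.2]
      simp only [Fintype.card_fin]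
      omega⟩

def star3 : Lam 3 → Lam 6 := hstar (by norm_num)
def star4 : Lam 4 → Lam 5 := hstar (by norm_num)
def star6 : Lam 6 → Lam 3 := hstar (by norm_num)
def star8 : Lam 8 → Lam 1 := hstar (by norm_num)

/-- The bilinear form on `Λᵏ(ℂ⁹)` induced by the standard bilinear form of `ℂ⁹`
(the Gram determinant form); the chosen basis is orthonormal for it. -/
def ip {k : ℕ} (u v : Lam k) : ℂ := ∑ s, u s * v s

/-- The standard bilinear form on `ℂ⁹`. -/
def ip9 (x y : Fin 9 → ℂ) : ℂ := ∑ i, x i * y i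

/-- A vector of `ℂ⁹` viewed as an element of `Λ¹(ℂ⁹)`. -/
def vec (x : Fin 9 → ℂ) : Lam 1 := fun s => ∑ i ∈ s.1, x i

/-- An element of `Λ¹(ℂ⁹)` viewed as a vector of `ℂ⁹`. -/
def unvec (u : Lam 1) : Fin 9 → ℂ := fun i => u ⟨{i}, Finset.card_singleton i⟩

/-- The `k × k` minor of `A` with rows `s` and columns `t` (in increasing order). -/
def minor {k : ℕ} (A : Matrix (Fin 9) (Fin 9) ℂ) (s t : Idx k) : ℂ :=
  Matrix.det (Matrix.of fun i j : Fin k =>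
    A (s.1.orderIsoOfFin s.2 i) (t.1.orderIsoOfFin t.2 j))

/-- The natural action of a matrix `A` on `Λᵏ(ℂ⁹)`:
`A(u₁ ∧ ⋯ ∧ u_k) = Au₁ ∧ ⋯ ∧ Au_k`, in coordinates given by minors (Cauchy–Binet). -/
def act {k : ℕ} (A : Matrix (Fin 9) (Fin 9) ℂ) (u : Lam k) : Lam k := fun s =>
  ∑ t, minor A s t * u t

/-- Coordinate matrix of the derivation action of `D` on `Λᵏ(ℂ⁹)`
(the differential of `act` at the identity). -/
def dminor {k : ℕ} (D : Matrix (Fin 9) (Fin 9) ℂ) (s t : Idx k) : ℂ :=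
  ∑ m : Fin k, Matrix.det (Matrix.of fun i j : Fin k =>
    if i = m then D (s.1.orderIsoOfFin s.2 i) (t.1.orderIsoOfFin t.2 j)
    else if (s.1.orderIsoOfFin s.2 i : Fin 9) = (t.1.orderIsoOfFin t.2 j : Fin 9) then 1 else 0)

/-- The derivation action of `D` on `Λᵏ(ℂ⁹)`:
`D(u₁ ∧ u₂ ∧ u₃) = Du₁ ∧ u₂ ∧ u₃ + u₁ ∧ Du₂ ∧ u₃ + u₁ ∧ u₂ ∧ Du₃`. -/
def der {k : ℕ} (D : Matrix (Fin 9) (Fin 9) ℂ) (u : Lam k) : Lam k := fun s =>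
  ∑ t, dminor D s t * u t

/-- The endomorphism `u × v` of `ℂ⁹`: `(u × v)x = ⋆(v ∧ ⋆(u ∧ x)) + (2/3)(u,v)x`. -/
def crossApp (u v : Lam 3) (x : Fin 9 → ℂ) : Fin 9 → ℂ := fun i =>
  unvec (star8 (wedge v (star4 (wedge u (vec x))))) i + (2 / 3 : ℂ) * ip u v * x i

/-- The matrix of the endomorphism `u × v` of `ℂ⁹`. -/
def crossMat (u v : Lam 3) : Matrix (Fin 9) (Fin 9) ℂ :=
  Matrix.of fun i j => crossApp u v (fun l => if l = j then 1 else 0) i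


lemma key_sign (i : Fin 9) (s : Finset (Fin 9)) (hs : s.card = 3) (hi : i ∉ s) :
    sgn {i}ᶜ {i} * (sgn s ({i}ᶜ \ s) * (sgn (insert i s) ({i}ᶜ \ s) * sgn s {i})) = -1 := by
  unfold sgn
  rw [Finset.sum_insert hi, ← pow_add, ← pow_add, ← pow_add]
  apply Odd.neg_one_pow
  rw [Nat.odd_iff]
  have key : ∀ a : Fin 9, (Finset.filter (fun j => j < a) ({i} : Finset (Fin 9))).card
      = if i < a then 1 else 0 := by
    intro a; rw [Finset.filter_singleton]; split <;> simp
  have e1 : ∑ a ∈ {i}ᶜ, (Finset.filter (fun j => j < a) {i}).card = 8 - i.val := by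
    rw [Finset.sum_congr rfl fun a _ => key a, ← Finset.card_filter]
    have : Finset.filter (fun a => i < a) {i}ᶜ = Finset.Ioi i := by
      ext a
      simp only [Finset.mem_filter, Finset.mem_compl, Finset.mem_singleton, Finset.mem_Ioi]
      exact ⟨fun h => h.2, fun h => ⟨Fin.ne_of_gt h, h⟩⟩
    rw [this, Fin.card_Ioi]
  have e4 : ∑ a ∈ s, (Finset.filter (fun j => j < a) ({i} : Finset (Fin 9))).card
      = (s.filter (fun a => i < a)).card := by
    rw [Finset.sum_congr rfl fun a _ => key a, ← Finset.card_filter]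
  have hx : Finset.filter (fun j => j < i) ({i}ᶜ \ s) = Finset.Iio i \ s := by
    ext a
    simp only [Finset.mem_filter, Finset.mem_sdiff, Finset.mem_compl, Finset.mem_singleton,
      Finset.mem_Iio]
    constructor
    · rintro ⟨⟨_, hns⟩, hlt⟩; exact ⟨hlt, hns⟩
    · rintro ⟨hlt, hns⟩; exact ⟨⟨Fin.ne_of_lt hlt, hns⟩, hlt⟩
  have hxc : (Finset.Iio i \ s).card + (Finset.Iio i ∩ s).card = i.val := by
    rw [Finset.card_sdiff_add_card_inter, Fin.card_Iio]
  have hsplit : (Finset.Iio i ∩ s).card + (s.filter (fun a => i < a)).card = 3 := by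
    have h1 : Finset.Iio i ∩ s = s.filter (fun a => a < i) := by
      ext a; simp only [Finset.mem_inter, Finset.mem_Iio, Finset.mem_filter]; tauto
    have h2 : s.filter (fun a => ¬ a < i) = s.filter (fun a => i < a) := by
      apply Finset.filter_congr
      intro a ha
      simp only [not_lt, eq_iff_iff]
      constructor
      · intro h; exact lt_of_le_of_ne h (fun he => hi (he ▸ ha))
      · intro h; exact h.le
    have h3 := Finset.card_filter_add_card_filter_not (s := s) (p := fun a => a < i)
    rw [h2, hs] at h3
    rw [h1]; exact h3
  rw [e1, e4, hx]
  have hi9 : i.val < 9 := i.isLt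
  omega

lemma compl_sdiff_eq (i : Fin 9) (s : Finset (Fin 9)) (_hsub : s ⊆ {i}ᶜ) :
    ({i}ᶜ \ s)ᶜ = insert i s := by
  ext a
  simp only [Finset.mem_compl, Finset.mem_sdiff, Finset.mem_singleton, Finset.mem_insert]
  tauto

lemma insert_sdiff_eq (i : Fin 9) (s : Finset (Fin 9)) (hi : i ∉ s) :
    insert i s \ s = {i} := by
  ext a
  simp only [Finset.mem_sdiff, Finset.mem_insert, Finset.mem_singleton]
  constructor
  · rintro ⟨h1 | h1, h2⟩
    · exact h1
    · exact absurd h1 h2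
  · rintro rfl; exact ⟨Or.inl rfl, hi⟩

lemma collapse (u : Lam 3) (i : Fin 9) (s : Finset (Fin 9)) (hs : s.card = 3) (hi : i ∉ s)
    (h4 : (insert i s).card = 4) :
    wedge u (vec (fun l => if l = i then (1:ℂ) else 0)) ⟨insert i s, h4⟩
      = sgn s {i} * u ⟨s, hs⟩ := by
  unfold wedge _root_.vec
  have hmem : s ∈ (insert i s).powerset.filter (fun p => p.card = 3) := by
    simp [Finset.mem_filter, Finset.mem_powerset, hs, Finset.subset_insert]
  rw [Finset.sum_eq_single_of_mem (⟨s, hmem⟩ :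
      {x // x ∈ (insert i s).powerset.filter (fun p => p.card = 3)})
      (Finset.mem_attach _ _)]
  · simp [insert_sdiff_eq i s hi]
  · rintro ⟨p, hp⟩ _ hne
    have hps : p ⊆ insert i s ∧ p.card = 3 := by
      simpa [Finset.mem_filter, Finset.mem_powerset] using hp
    have hip : i ∈ p := by
      by_contra hip
      have hsub : p ⊆ s := fun a ha => by
        rcases Finset.mem_insert.mp (hps.1 ha) with h | h
        · exact absurd (h ▸ ha) hip
        · exact h
      have : p = s := Finset.eq_of_subset_of_card_le hsub (by rw [hps.2, hs])
      exact hne (Subtype.ext this)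
    have hz : ∑ a ∈ insert i s \ p, (if a = i then (1:ℂ) else 0) = 0 := by
      rw [Finset.sum_ite_eq' (insert i s \ p) i (fun _ => (1:ℂ))]
      simp [Finset.mem_sdiff, hip]
    rw [hz, mul_zero]

lemma reindex (i : Fin 9) (g : Idx 3 → ℂ) :
    ∑ s ∈ (({i}ᶜ : Finset (Fin 9)).powerset.filter (fun p => p.card = 3)).attach,
      g ⟨s.1, (Finset.mem_filter.mp s.2).2⟩
    = ∑ t : Idx 3, (if i ∈ t.1 then 0 else g t) := by
  have h1 : ∀ t : Idx 3, (if i ∈ t.1 then (0:ℂ) else g t) = (if i ∉ t.1 then g t else 0) := by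
    intro t; by_cases h : i ∈ t.1 <;> simp [h]
  simp_rw [h1]
  rw [← Finset.sum_filter]
  refine Finset.sum_bij
    (fun (s : {x // x ∈ Finset.filter (fun p => p.card = 3) ({i}ᶜ : Finset (Fin 9)).powerset}) _ =>
      (⟨s.1, by exact (Finset.mem_filter.mp s.2).2⟩ : Idx 3)) ?_ ?_ ?_ ?_
  · intro a _
    simp only [Finset.mem_filter, Finset.mem_univ, true_and]
    intro hcontra
    have := (Finset.mem_powerset.mp (Finset.mem_filter.mp a.2).1) hcontra
    simp at this
  · intro a _ b _ hab
    have : a.1 = b.1 := by simpa using hab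
    exact Subtype.ext this
  · intro t ht
    have hti : i ∉ t.1 := (Finset.mem_filter.mp ht).2
    have hmem : t.1 ∈ ({i}ᶜ : Finset (Fin 9)).powerset.filter (fun p => p.card = 3) := by
      simp only [Finset.mem_filter, Finset.mem_powerset]
      refine ⟨fun a ha => Finset.mem_compl.mpr ?_, t.2⟩
      simp only [Finset.mem_singleton]
      rintro rfl; exact hti ha
    exact ⟨⟨t.1, hmem⟩, Finset.mem_attach _ _, rfl⟩
  · intro a _; rfl

lemma star8_apply (z : Lam 8) (t : Idx 1) (h : (t.1ᶜ).card = 8) :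
    star8 z t = sgn t.1ᶜ t.1 * z ⟨t.1ᶜ, h⟩ := rfl

lemma star4_apply (y : Lam 4) (t : Idx 5) (h : (t.1ᶜ).card = 4) :
    star4 y t = sgn t.1ᶜ t.1 * y ⟨t.1ᶜ, h⟩ := rfl

lemma wedge_apply35 (v : Lam 3) (y : Lam 5) (w : Idx 8) :
    wedge v y w = ∑ s ∈ (w.1.powerset.filter fun p => p.card = 3).attach,
      sgn s.1 (w.1 \ s.1) * v ⟨s.1, (Finset.mem_filter.mp s.2).2⟩ *
        y ⟨w.1 \ s.1, by
          have h := Finset.mem_filter.mp s.2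
          rw [Finset.card_sdiff_of_subset (Finset.mem_powerset.mp h.1), w.2, h.2]⟩ := rfl

lemma hodge_part (u v : Lam 3) (i : Fin 9) :
    unvec (star8 (wedge v (star4 (wedge u (vec (fun l => if l = i then (1:ℂ) else 0)))))) i
      = ∑ t : Idx 3, (if i ∈ t.1 then 0 else -(u t * v t)) := by
  rw [← reindex i (fun t => -(u t * v t))]
  have hc8 : (({i} : Finset (Fin 9))ᶜ).card = 8 := by
    rw [Finset.card_compl]; simp
  show star8 (wedge v (star4 (wedge u (vec fun l => if l = i then (1:ℂ) else 0))))
      ⟨{i}, Finset.card_singleton i⟩ = _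
  rw [star8_apply _ _ hc8]
  rw [show (⟨({i} : Finset (Fin 9))ᶜ, hc8⟩ :
      {s : Finset (Fin 9) // s.card = 8}) = ⟨{i}ᶜ, hc8⟩ from rfl]
  rw [wedge_apply35 v _ ⟨{i}ᶜ, hc8⟩, Finset.mul_sum]
  apply Finset.sum_congr rfl
  intro s _
  have hsub : s.1 ⊆ {i}ᶜ := by exact Finset.mem_powerset.mp (Finset.mem_filter.mp s.2).1
  have hcard : s.1.card = 3 := by exact (Finset.mem_filter.mp s.2).2
  have hi' : i ∉ s.1 := fun h => by simpa using hsub h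
  have hC : ({i}ᶜ \ s.1)ᶜ = insert i s.1 := compl_sdiff_eq i s.1 hsub
  have h4 : (insert i s.1).card = 4 := by rw [Finset.card_insert_of_notMem hi', hcard]
  have hc4 : (({i}ᶜ \ s.1)ᶜ).card = 4 := by rw [hC]; exact h4
  rw [star4_apply _ _ hc4]
  have hW : (wedge u (vec fun l => if l = i then (1:ℂ) else 0)) ⟨({i}ᶜ \ s.1)ᶜ, hc4⟩
      = sgn s.1 {i} * u ⟨s.1, hcard⟩ := by
    rw [show (⟨({i}ᶜ \ s.1)ᶜ, hc4⟩ : Idx 4) = ⟨insert i s.1, h4⟩ from Subtype.ext hC]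
    exact collapse u i s.1 hcard hi' h4
  rw [hW, hC]
  have hK := key_sign i s.1 hcard hi'
  linear_combination (u ⟨s.1, hcard⟩ * v ⟨s.1, hcard⟩) * hK

lemma count_compl (t : Idx 3) (c : ℂ) :
    ∑ i : Fin 9, (if i ∈ t.1 then (0:ℂ) else c) = 6 * c := by
  rw [Finset.sum_ite, Finset.sum_const_zero, Finset.sum_const, zero_add]
  have h1 : Finset.univ.filter (fun i => ¬ i ∈ t.1) = t.1ᶜ := by
    ext a; simp
  rw [h1, Finset.card_compl, t.2]
  simp only [Fintype.card_fin]
  norm_num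

/-- The endomorphism `u × v` of `ℂ⁹` has trace zero. -/
theorem stmt4 (u v : Lam 3) : (crossMat u v).trace = 0 := by
  have hdiag : ∀ i : Fin 9, crossMat u v i i
      = (∑ t : Idx 3, (if i ∈ t.1 then 0 else -(u t * v t))) + (2/3) * ip u v := by
    intro i
    show crossApp u v (fun l => if l = i then 1 else 0) i = _
    unfold crossApp
    rw [hodge_part]
    simp
  rw [Matrix.trace]
  simp only [Matrix.diag]
  rw [Finset.sum_congr rfl (fun i _ => hdiag i), Finset.sum_add_distrib, Finset.sum_comm]
  rw [Finset.sum_congr rfl (fun t _ => count_compl t (-(u t * v t)))]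
  rw [Finset.sum_const, Finset.card_univ, Fintype.card_fin]
  have h2 : ∑ t : Idx 3, 6 * -(u t * v t) = -(6 * ip u v) := by
    rw [ip, Finset.mul_sum]
    rw [← Finset.sum_neg_distrib]
    apply Finset.sum_congr rfl
    intro t _
    ring
  rw [h2, nsmul_eq_mul]
  push_cast
  ring

end
end

section
/- For all A in SL(9,ℂ) and u, v in Λ³(ℂ⁹), one has A ∘ (u × v) ∘ A⁻¹ = (Au) × ((Aᵀ)⁻¹ v), where × denotes the cross product endomorphism of ℂ⁹. -/
open scoped BigOperators
open Matrix

noncomputable section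

abbrev en {k : ℕ} (s : Idx k) (i : Fin k) : Fin 9 := s.1.orderIsoOfFin s.2 i
lemma en_mem {k} (s : Idx k) (i : Fin k) : en s i ∈ s.1 := (s.1.orderIsoOfFin s.2 i).2
lemma en_strictMono {k} (s : Idx k) : StrictMono (en s) := fun _ _ h =>
  Subtype.coe_lt_coe.2 ((s.1.orderIsoOfFin s.2).lt_iff_lt.2 h)
lemma en_eq_orderEmbOfFin {k} (s : Idx k) : en s = s.1.orderEmbOfFin s.2 := by
  funext i; exact Finset.coe_orderIsoOfFin_apply s.1 s.2 i
lemma en_surj {k} (s : Idx k) {x : Fin 9} (hx : x ∈ s.1) : ∃ i, en s i = x := by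
  obtain ⟨i, hi⟩ := (s.1.orderIsoOfFin s.2).surjective ⟨x, hx⟩
  exact ⟨i, by rw [en, hi]⟩
lemma card_filter_lt_en {k} (s : Idx k) (i : Fin k) :
    (s.1.filter (fun x => x < en s i)).card = (i : ℕ) := by
  have h : (s.1.filter (fun x => x < en s i)) = (Finset.univ.filter (fun j : Fin k => j < i)).image (en s) := by
    ext x
    simp only [Finset.mem_filter, Finset.mem_image, Finset.mem_univ, true_and]
    constructor
    · rintro ⟨hx, hlt⟩
      obtain ⟨j, rfl⟩ := en_surj s hx
      exact ⟨j, (en_strictMono s).lt_iff_lt.1 hlt, rfl⟩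
    · rintro ⟨j, hj, rfl⟩
      exact ⟨en_mem s j, (en_strictMono s) hj⟩
  rw [h, Finset.card_image_of_injective _ (en_strictMono s).injective]
  have h2 : Finset.univ.filter (fun j : Fin k => j < i) = Finset.Iio i := by ext; simp
  rw [h2, Fin.card_Iio]

lemma card_filter_gt_en {k} (s : Idx k) (i : Fin k) :
    (s.1.filter (fun x => en s i < x)).card = k - 1 - (i : ℕ) := by
  have h0 := Finset.card_filter_add_card_filter_not
    (s := s.1) (p := fun x => x < en s i)
  have h1 : s.1.filter (fun x => ¬ x < en s i) =
      insert (en s i) (s.1.filter (fun x => en s i < x)) := by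
    ext x
    simp only [Finset.mem_filter, Finset.mem_insert, not_lt]
    constructor
    · rintro ⟨hx, hle⟩
      rcases eq_or_lt_of_le hle with h | h
      · exact Or.inl h.symm
      · exact Or.inr ⟨hx, h⟩
    · rintro (rfl | ⟨hx, h⟩)
      · exact ⟨en_mem s i, le_refl _⟩
      · exact ⟨hx, le_of_lt h⟩
  have h2 : en s i ∉ s.1.filter (fun x => en s i < x) := by
    rw [Finset.mem_filter]; exact fun h => lt_irrefl _ h.2
  rw [h1, Finset.card_insert_of_notMem h2, card_filter_lt_en, s.2] at h0
  have := i.2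
  omega

lemma erase_card {k} (w : Idx (k+1)) (i : Fin (k+1)) :
    (w.1.erase (en w i)).card = k := by
  rw [Finset.card_erase_of_mem (en_mem w i), w.2]
  rfl

lemma en_erase {k} (w : Idx (k+1)) (i : Fin (k+1)) (m : Fin k) :
    en ⟨w.1.erase (en w i), erase_card w i⟩ m = en w (i.succAbove m) := by
  have hsm : StrictMono (fun m : Fin k => en w (i.succAbove m)) :=
    (en_strictMono w).comp (Fin.strictMono_succAbove i)
  have hmem : ∀ m : Fin k, en w (i.succAbove m) ∈ w.1.erase (en w i) := fun m =>
    Finset.mem_erase.2 ⟨fun h => (Fin.succAbove_ne i m) ((en_strictMono w).injective h), en_mem _ _⟩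
  have hu := Finset.orderEmbOfFin_unique (erase_card w i) hmem hsm
  calc en ⟨w.1.erase (en w i), erase_card w i⟩ m
      = (w.1.erase (en w i)).orderEmbOfFin (erase_card w i) m :=
        congrFun (en_eq_orderEmbOfFin _) m
    _ = en w (i.succAbove m) := (congrFun hu m).symm

lemma sgn_singleton_right (P : Finset (Fin 9)) (j : Fin 9) :
    sgn P {j} = (-1 : ℂ) ^ (P.filter (fun x => j < x)).card := by
  unfold sgn
  congr 1
  rw [Finset.card_filter]
  refine Finset.sum_congr rfl fun i _ => ?_
  rw [Finset.filter_singleton]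
  split <;> simp

lemma sgn_singleton_left (a : Fin 9) (T : Finset (Fin 9)) :
    sgn {a} T = (-1 : ℂ) ^ (T.filter (fun x => x < a)).card := by
  simp [sgn]

lemma sgn_union_right {s t r : Finset (Fin 9)} (h : Disjoint t r) :
    sgn s (t ∪ r) = sgn s t * sgn s r := by
  unfold sgn
  rw [← pow_add]
  congr 1
  rw [← Finset.sum_add_distrib]
  refine Finset.sum_congr rfl fun i _ => ?_
  rw [Finset.filter_union, Finset.card_union_of_disjoint
    (Finset.disjoint_filter_filter h)]

lemma sgn_union_left {s t : Finset (Fin 9)} (r : Finset (Fin 9)) (h : Disjoint s t) :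
    sgn (s ∪ t) r = sgn s r * sgn t r := by
  unfold sgn
  rw [← pow_add, ← Finset.sum_union h]

lemma sgn_erase_max (T : Finset (Fin 9)) (hT : T.Nonempty) :
    sgn (T.erase (T.max' hT)) {T.max' hT} = 1 := by
  rw [sgn_singleton_right]
  have : (T.erase (T.max' hT)).filter (fun x => T.max' hT < x) = ∅ := by
    ext x
    simp only [Finset.mem_filter, Finset.mem_erase, Finset.notMem_empty, iff_false]
    rintro ⟨⟨hne, hx⟩, hlt⟩
    exact absurd (T.le_max' x hx) (not_le.2 hlt)
  rw [this]
  simp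
lemma wedge_apply {k l : ℕ} (u : Lam k) (v : Lam l) (w : Idx (k+l)) :
    wedge u v w = ∑ s : Idx k, (if h : s.1 ⊆ w.1
      then sgn s.1 (w.1 \ s.1) * u s *
        v ⟨w.1 \ s.1, by rw [Finset.card_sdiff_of_subset h, w.2, s.2]; omega⟩
      else 0) := by
  classical
  set g : Finset (Fin 9) → ℂ := fun s =>
    if h : s.card = k ∧ s ⊆ w.1
    then sgn s (w.1 \ s) * u ⟨s, h.1⟩ *
      v ⟨w.1 \ s, by rw [Finset.card_sdiff_of_subset h.2, w.2, h.1]; omega⟩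
    else 0 with hg
  have hL : wedge u v w = ∑ s ∈ w.1.powerset.filter (fun s => s.card = k), g s := by
    rw [← Finset.sum_attach (w.1.powerset.filter (fun s => s.card = k)) g]
    unfold wedge
    refine Finset.sum_congr rfl fun s _ => ?_
    have hs := s.2
    simp only [Finset.mem_filter, Finset.mem_powerset] at hs
    rw [hg]; dsimp only
    rw [dif_pos ⟨hs.2, hs.1⟩]
  have hM : ∑ s ∈ w.1.powerset.filter (fun s => s.card = k), g s
      = ∑ s ∈ Finset.univ.filter (fun s : Finset (Fin 9) => s.card = k), g s := by
    refine Finset.sum_subset (fun s hs => ?_) (fun s hs hns => ?_)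
    · simp only [Finset.mem_filter, Finset.mem_powerset] at hs
      simp [hs.2]
    · simp only [Finset.mem_filter, Finset.mem_powerset, Finset.mem_univ, true_and] at hs hns
      rw [hg]; dsimp only
      rw [dif_neg]
      rintro ⟨h1, h2⟩
      exact hns (by simp [hs, h2])
  have hS : ∑ s ∈ Finset.univ.filter (fun s : Finset (Fin 9) => s.card = k), g s
      = ∑ s : Idx k, g s.1 := by
    exact Finset.sum_subtype _ (by intro x; simp) g
  rw [hL, hM, hS]
  refine Finset.sum_congr rfl fun s _ => ?_
  rw [hg]; dsimp only
  by_cases h : s.1 ⊆ w.1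
  · rw [dif_pos ⟨s.2, h⟩, dif_pos h]
  · rw [dif_neg (fun hc => h hc.2), dif_neg h]
def bas {k : ℕ} (T : Idx k) : Lam k := fun s => if s = T then 1 else 0

lemma sum_bas {k} (u : Lam k) : u = ∑ T, u T • bas T := by
  funext s
  rw [Finset.sum_apply]
  simp [bas]

lemma act_bas {k} (C : Matrix (Fin 9) (Fin 9) ℂ) (T s : Idx k) :
    act C (bas T) s = minor C s T := by
  simp [act, bas, mul_ite, mul_one, mul_zero]

lemma act_sum {k : ℕ} {ι : Type*} (C : Matrix (Fin 9) (Fin 9) ℂ) (I : Finset ι) (f : ι → Lam k) :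
    act C (∑ i ∈ I, f i) = ∑ i ∈ I, act C (f i) := by
  funext s
  simp only [act, Finset.sum_apply, Finset.mul_sum]
  rw [Finset.sum_comm]

lemma act_smul {k : ℕ} (C : Matrix (Fin 9) (Fin 9) ℂ) (c : ℂ) (u : Lam k) :
    act C (c • u) = c • act C u := by
  funext s
  simp only [act, Pi.smul_apply, smul_eq_mul, Finset.mul_sum]
  refine Finset.sum_congr rfl fun t _ => ?_
  ring

lemma wedge_sum_left {k l : ℕ} {ι : Type*} (I : Finset ι) (f : ι → Lam k) (v : Lam l) :
    wedge (∑ i ∈ I, f i) v = ∑ i ∈ I, wedge (f i) v := by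
  funext w
  rw [Finset.sum_apply]
  simp only [wedge_apply]
  rw [Finset.sum_comm]
  refine Finset.sum_congr rfl fun s _ => ?_
  by_cases h : s.1 ⊆ w.1
  · simp only [dif_pos h, Finset.sum_apply, Finset.sum_mul, Finset.mul_sum]
  · simp only [dif_neg h, Finset.sum_const_zero]

lemma wedge_sum_right {k l : ℕ} {ι : Type*} (I : Finset ι) (u : Lam k) (f : ι → Lam l) :
    wedge u (∑ i ∈ I, f i) = ∑ i ∈ I, wedge u (f i) := by
  funext w
  rw [Finset.sum_apply]
  simp only [wedge_apply]
  rw [Finset.sum_comm]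
  refine Finset.sum_congr rfl fun s _ => ?_
  by_cases h : s.1 ⊆ w.1
  · simp only [dif_pos h, Finset.sum_apply, Finset.mul_sum]
  · simp only [dif_neg h, Finset.sum_const_zero]

lemma wedge_smul_left {k l : ℕ} (c : ℂ) (u : Lam k) (v : Lam l) :
    wedge (c • u) v = c • wedge u v := by
  funext w
  simp only [wedge_apply, Pi.smul_apply, smul_eq_mul, Finset.mul_sum]
  refine Finset.sum_congr rfl fun s _ => ?_
  by_cases h : s.1 ⊆ w.1
  · simp only [dif_pos h]; ring
  · simp only [dif_neg h, mul_zero]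

lemma wedge_smul_right {k l : ℕ} (c : ℂ) (u : Lam k) (v : Lam l) :
    wedge u (c • v) = c • wedge u v := by
  funext w
  simp only [wedge_apply, Pi.smul_apply, smul_eq_mul, Finset.mul_sum]
  refine Finset.sum_congr rfl fun s _ => ?_
  by_cases h : s.1 ⊆ w.1
  · simp only [dif_pos h]; ring
  · simp only [dif_neg h, mul_zero]

lemma wedge_zero_left {k l : ℕ} (v : Lam l) : wedge (0 : Lam k) v = 0 := by
  funext w
  simp only [wedge_apply, Pi.zero_apply, mul_zero, zero_mul]
  refine Finset.sum_eq_zero fun s _ => ?_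
  by_cases h : s.1 ⊆ w.1
  · simp [dif_pos h]
  · simp [dif_neg h]

lemma wedge_zero_right {k l : ℕ} (u : Lam k) : wedge u (0 : Lam l) = 0 := by
  funext w
  simp only [wedge_apply, Pi.zero_apply, mul_zero, zero_mul]
  refine Finset.sum_eq_zero fun s _ => ?_
  by_cases h : s.1 ⊆ w.1
  · simp [dif_pos h]
  · simp [dif_neg h]

lemma wedge_bas_bas {k l : ℕ} (S : Idx k) (T : Idx l) :
    wedge (bas S) (bas T) = if h : Disjoint S.1 T.1
      then sgn S.1 T.1 • bas (⟨S.1 ∪ T.1, by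
        rw [Finset.card_union_of_disjoint h, S.2, T.2]⟩ : Idx (k+l))
      else 0 := by
  funext w
  rw [wedge_apply, Finset.sum_eq_single S _ (fun h => absurd (Finset.mem_univ S) h)]
  · by_cases hsub : S.1 ⊆ w.1
    · rw [dif_pos hsub]
      by_cases ht : w.1 \ S.1 = T.1
      · have hd : Disjoint S.1 T.1 := ht ▸ Finset.disjoint_sdiff
        have hw : w = ⟨S.1 ∪ T.1, by rw [Finset.card_union_of_disjoint hd, S.2, T.2]⟩ := by
          apply Subtype.ext
          show w.1 = S.1 ∪ T.1
          rw [← ht, Finset.union_sdiff_of_subset hsub]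
        rw [dif_pos hd]
        have h1 : (⟨w.1 \ S.1, by
            rw [Finset.card_sdiff_of_subset hsub, w.2, S.2]; omega⟩ : Idx l) = T := Subtype.ext ht
        rw [h1]
        simp only [bas, if_pos rfl, Pi.smul_apply, smul_eq_mul]
        rw [if_pos hw]
        have : sgn S.1 (w.1 \ S.1) = sgn S.1 T.1 := by rw [ht]
        rw [this]; simp
      · have h1 : (⟨w.1 \ S.1, by
            rw [Finset.card_sdiff_of_subset hsub, w.2, S.2]; omega⟩ : Idx l) ≠ T :=
          fun hc => ht (congrArg Subtype.val hc)
        simp only [bas, if_pos rfl, if_neg h1, mul_zero, mul_one]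
        by_cases hd : Disjoint S.1 T.1
        · rw [dif_pos hd]
          simp only [Pi.smul_apply, smul_eq_mul, bas]
          rw [if_neg, mul_zero]
          intro hc
          apply ht
          have : w.1 = S.1 ∪ T.1 := congrArg Subtype.val hc
          rw [this, Finset.union_sdiff_cancel_left hd]
        · rw [dif_neg hd]; rfl
    · rw [dif_neg hsub]
      by_cases hd : Disjoint S.1 T.1
      · rw [dif_pos hd]
        simp only [Pi.smul_apply, smul_eq_mul, bas]
        rw [if_neg, mul_zero]
        intro hc
        apply hsub
        have : w.1 = S.1 ∪ T.1 := congrArg Subtype.val hc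
        rw [this]
        exact Finset.subset_union_left
      · rw [dif_neg hd]; rfl
  · intro s _ hs
    by_cases h : s.1 ⊆ w.1
    · rw [dif_pos h]
      simp [bas, if_neg hs]
    · rw [dif_neg h]
lemma neg_one_pow_flip {a b : ℕ} (h : b ≤ a) : ((-1 : ℂ)) ^ (a - b) = (-1) ^ (a + b) := by
  have h2 : a + b = (a - b) + 2 * b := by omega
  rw [h2, pow_add, pow_mul]
  simp

lemma neg_one_pow_add_add (a b c : ℕ) :
    ((-1 : ℂ)) ^ (a + c) * (-1) ^ (b + c) = (-1) ^ (a + b) := by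
  rw [← pow_add]
  have h2 : a + c + (b + c) = (a + b) + 2 * c := by omega
  rw [h2, pow_add, pow_mul]
  simp

lemma en_singleton (a : Fin 9) (h : ({a} : Finset (Fin 9)).card = 1) (i : Fin 1) :
    en (⟨{a}, h⟩ : Idx 1) i = a := by
  have := congrFun (en_eq_orderEmbOfFin (⟨{a}, h⟩ : Idx 1)) i
  rw [this]
  exact Finset.orderEmbOfFin_singleton a i

lemma minor_singleton (C : Matrix (Fin 9) (Fin 9) ℂ) (a j : Fin 9)
    (h : ({a} : Finset (Fin 9)).card = 1) (h' : ({j} : Finset (Fin 9)).card = 1) :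
    minor C ⟨{a}, h⟩ ⟨{j}, h'⟩ = C a j := by
  rw [minor, Matrix.det_fin_one]
  simp only [Matrix.of_apply]
  rw [show (⟨{a}, h⟩ : Idx 1).1.orderIsoOfFin (⟨{a}, h⟩ : Idx 1).2 0 = (en ⟨{a}, h⟩ 0 : Fin 9) from rfl]
  rw [show (⟨{j}, h'⟩ : Idx 1).1.orderIsoOfFin (⟨{j}, h'⟩ : Idx 1).2 0 = (en ⟨{j}, h'⟩ 0 : Fin 9) from rfl]
  rw [en_singleton, en_singleton]

lemma sgn_erase_en {k : ℕ} (w : Idx (k+1)) (r : Fin (k+1)) :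
    sgn (w.1.erase (en w r)) {en w r} = (-1 : ℂ) ^ (k + (r : ℕ)) := by
  rw [sgn_singleton_right]
  have hf : (w.1.erase (en w r)).filter (fun x => en w r < x)
      = w.1.filter (fun x => en w r < x) := by
    ext x
    simp only [Finset.mem_filter, Finset.mem_erase]
    constructor
    · rintro ⟨⟨_, hx⟩, hlt⟩; exact ⟨hx, hlt⟩
    · rintro ⟨hx, hlt⟩; exact ⟨⟨ne_of_gt hlt, hx⟩, hlt⟩
  rw [hf, card_filter_gt_en w r]
  have : k + 1 - 1 - (r : ℕ) = k - (r : ℕ) := by omega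
  rw [this, neg_one_pow_flip (by omega : (r : ℕ) ≤ k)]

lemma W1_step1 {k : ℕ} (C : Matrix (Fin 9) (Fin 9) ℂ) (P : Idx k) (j : Fin 9) (w : Idx (k+1)) :
    (∑ s : Idx k, if h : s.1 ⊆ w.1
      then sgn s.1 (w.1 \ s.1) * minor C s P *
        minor C ⟨w.1 \ s.1, by rw [Finset.card_sdiff_of_subset h, w.2, s.2]; omega⟩
          ⟨{j}, Finset.card_singleton j⟩
      else 0)
    = ∑ r : Fin (k+1), (-1 : ℂ) ^ (k + (r : ℕ)) *
        minor C ⟨w.1.erase (en w r), erase_card w r⟩ P * C (en w r) j := by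
  classical
  rw [← Finset.sum_filter_add_sum_filter_not Finset.univ (fun s : Idx k => s.1 ⊆ w.1)]
  have h2 : (∑ s ∈ Finset.univ.filter (fun s : Idx k => ¬ s.1 ⊆ w.1),
      if h : s.1 ⊆ w.1
      then sgn s.1 (w.1 \ s.1) * minor C s P *
        minor C ⟨w.1 \ s.1, by rw [Finset.card_sdiff_of_subset h, w.2, s.2]; omega⟩
          ⟨{j}, Finset.card_singleton j⟩
      else 0) = 0 := by
    refine Finset.sum_eq_zero fun s hs => ?_
    rw [Finset.mem_filter] at hs
    rw [dif_neg hs.2]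
  rw [h2, add_zero]
  refine (Finset.sum_bij
    (fun (r : Fin (k+1)) (_ : r ∈ Finset.univ) =>
      (⟨w.1.erase (en w r), erase_card w r⟩ : Idx k)) ?_ ?_ ?_ ?_).symm
  · intro r _
    rw [Finset.mem_filter]
    exact ⟨Finset.mem_univ _, Finset.erase_subset _ _⟩
  · intro r _ r' _ hrr
    have h3 : w.1.erase (en w r) = w.1.erase (en w r') := congrArg Subtype.val hrr
    exact (en_strictMono w).injective ((Finset.erase_inj w.1 (en_mem w r)).1 h3)
  · intro s hs
    rw [Finset.mem_filter] at hs
    have hcard : (w.1 \ s.1).card = 1 := by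
      rw [Finset.card_sdiff_of_subset hs.2, w.2, s.2]; omega
    obtain ⟨a, ha⟩ := Finset.card_eq_one.1 hcard
    have haw : a ∈ w.1 := by
      have : a ∈ w.1 \ s.1 := ha ▸ Finset.mem_singleton_self a
      exact (Finset.mem_sdiff.1 this).1
    obtain ⟨r, hr⟩ := en_surj w haw
    refine ⟨r, Finset.mem_univ r, ?_⟩
    apply Subtype.ext
    show w.1.erase (en w r) = s.1
    rw [hr, Finset.erase_eq, ← ha, Finset.sdiff_sdiff_eq_self hs.2]
  · intro r _
    have herase : (w.1.erase (en w r)) ⊆ w.1 := Finset.erase_subset _ _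
    rw [dif_pos herase]
    have hsd : w.1 \ (w.1.erase (en w r)) = {en w r} := Finset.sdiff_erase_self (en_mem w r)
    have h4 : (⟨w.1 \ (w.1.erase (en w r)), by
        rw [Finset.card_sdiff_of_subset herase, w.2, erase_card w r]; omega⟩ : Idx 1)
        = ⟨{en w r}, Finset.card_singleton _⟩ := Subtype.ext hsd
    rw [h4, minor_singleton, hsd, sgn_erase_en]
lemma W1_case_notmem {k : ℕ} (C : Matrix (Fin 9) (Fin 9) ℂ) (P : Idx k) (j : Fin 9)
    (hj : j ∉ P.1) (w : Idx (k+1)) :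
    (∑ r : Fin (k+1), (-1 : ℂ) ^ (k + (r : ℕ)) *
        minor C ⟨w.1.erase (en w r), erase_card w r⟩ P * C (en w r) j)
    = sgn P.1 {j} * minor C w ⟨insert j P.1, by
        rw [Finset.card_insert_of_notMem hj, P.2]⟩ := by
  classical
  set Q' : Idx (k+1) := ⟨insert j P.1, by rw [Finset.card_insert_of_notMem hj, P.2]⟩ with hQ'
  set c₁ : Fin (k+1) := (Q'.1.orderIsoOfFin Q'.2).symm ⟨j, Finset.mem_insert_self j P.1⟩ with hc₁def
  have hc₁ : en Q' c₁ = j := by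
    show ((Q'.1.orderIsoOfFin Q'.2) c₁ : Fin 9) = j
    rw [hc₁def, OrderIso.apply_symm_apply]
  set M : Matrix (Fin (k+1)) (Fin (k+1)) ℂ :=
    Matrix.of fun r c => C (en w r) (en Q' c) with hM
  have hMdet : minor C w Q' = M.det := rfl
  have hsub : ∀ r : Fin (k+1), (M.submatrix r.succAbove c₁.succAbove).det
      = minor C ⟨w.1.erase (en w r), erase_card w r⟩ P := by
    intro r
    rw [minor]
    congr 1
    ext m c
    show C (en w (r.succAbove m)) (en Q' (c₁.succAbove c)) = _
    rw [← en_erase w r m, ← en_erase Q' c₁ c]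
    have hP : (⟨Q'.1.erase (en Q' c₁), erase_card Q' c₁⟩ : Idx k) = P := by
      apply Subtype.ext
      show Q'.1.erase (en Q' c₁) = P.1
      rw [hc₁]
      exact Finset.erase_insert hj
    rw [hP]
    rfl
  have hdet := Matrix.det_succ_column M c₁
  have hMc : ∀ r, M r c₁ = C (en w r) j := fun r => by
    show C (en w r) (en Q' c₁) = _
    rw [hc₁]
  have hsgn : sgn P.1 {j} = (-1 : ℂ) ^ (k + (c₁ : ℕ)) := by
    rw [sgn_singleton_right]
    have hfil : P.1.filter (fun x => j < x) = Q'.1.filter (fun x => en Q' c₁ < x) := by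
      rw [hc₁]
      ext x
      simp only [Finset.mem_filter, hQ', Finset.mem_insert]
      constructor
      · rintro ⟨hx, hlt⟩; exact ⟨Or.inr hx, hlt⟩
      · rintro ⟨hx, hlt⟩
        rcases hx with rfl | hx
        · exact absurd hlt (lt_irrefl _)
        · exact ⟨hx, hlt⟩
    rw [hfil, card_filter_gt_en Q' c₁]
    have h5 : k + 1 - 1 - (c₁ : ℕ) = k - (c₁ : ℕ) := by omega
    rw [h5, neg_one_pow_flip (by omega : (c₁ : ℕ) ≤ k)]
  rw [hsgn, hMdet, hdet, Finset.mul_sum]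
  refine Finset.sum_congr rfl fun r _ => ?_
  rw [hsub r, hMc r]
  have h8 := neg_one_pow_add_add k (r : ℕ) (c₁ : ℕ)
  rw [← h8]
  ring

lemma W1_case_mem {k : ℕ} (C : Matrix (Fin 9) (Fin 9) ℂ) (P : Idx k) (j : Fin 9)
    (hj : j ∈ P.1) (w : Idx (k+1)) :
    (∑ r : Fin (k+1), (-1 : ℂ) ^ (k + (r : ℕ)) *
        minor C ⟨w.1.erase (en w r), erase_card w r⟩ P * C (en w r) j) = 0 := by
  classical
  set N : Matrix (Fin (k+1)) (Fin (k+1)) ℂ :=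
    Matrix.of fun r c => C (en w r) (Fin.snoc (α := fun _ => Fin 9) (en P) j c) with hN
  obtain ⟨p₀, hp₀⟩ := en_surj P hj
  have hNc : ∀ (r : Fin (k+1)) (c : Fin k), N r c.castSucc = C (en w r) (en P c) := by
    intro r c
    rw [hN]
    simp [Fin.snoc_castSucc]
  have hNl : ∀ r : Fin (k+1), N r (Fin.last k) = C (en w r) j := by
    intro r
    rw [hN]
    simp [Fin.snoc_last]
  have hdup : N.det = 0 := by
    refine Matrix.det_zero_of_column_eq (M := N) (i := p₀.castSucc) (j := Fin.last k)
      (ne_of_lt (Fin.castSucc_lt_last p₀)) fun r => ?_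
    rw [hNc r p₀, hNl r, hp₀]
  have hexp := Matrix.det_succ_column N (Fin.last k)
  have hsub : ∀ r : Fin (k+1), (N.submatrix r.succAbove (Fin.last k).succAbove).det
      = minor C ⟨w.1.erase (en w r), erase_card w r⟩ P := by
    intro r
    rw [minor]
    congr 1
    ext m c
    rw [Matrix.submatrix_apply, Fin.succAbove_last, hNc, ← en_erase w r m]
    rfl
  rw [hdup] at hexp
  have heq : (∑ r : Fin (k+1), (-1 : ℂ) ^ (k + (r : ℕ)) *
        minor C ⟨w.1.erase (en w r), erase_card w r⟩ P * C (en w r) j)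
      = ∑ r : Fin (k+1), (-1 : ℂ) ^ ((r : ℕ) + ((Fin.last k : Fin (k+1)) : ℕ)) * N r (Fin.last k) *
          (N.submatrix r.succAbove (Fin.last k).succAbove).det := by
    refine Finset.sum_congr rfl fun r _ => ?_
    rw [hsub r, Fin.val_last]
    rw [hNl r, add_comm (r : ℕ) k]
    ring
  rw [heq, ← hexp]

lemma W1_bas {k : ℕ} (C : Matrix (Fin 9) (Fin 9) ℂ) (P : Idx k) (Q : Idx 1) :
    wedge (act C (bas P)) (act C (bas Q)) = act C (wedge (bas P) (bas Q)) := by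
  classical
  obtain ⟨j, hj⟩ := Finset.card_eq_one.1 Q.2
  have hQ : Q = ⟨{j}, Finset.card_singleton j⟩ := Subtype.ext hj
  subst hQ
  funext w
  rw [wedge_apply]
  simp only [act_bas]
  rw [W1_step1 C P j w, wedge_bas_bas]
  by_cases hjP : j ∈ P.1
  · rw [dif_neg (by simpa using hjP)]
    rw [W1_case_mem C P j hjP w]
    simp [act]
  · rw [dif_pos (by simpa using hjP)]
    rw [W1_case_notmem C P j hjP w]
    rw [act_smul, Pi.smul_apply, act_bas, smul_eq_mul]
    have hun : P.1 ∪ {j} = insert j P.1 := by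
      rw [Finset.union_comm, ← Finset.insert_eq]
    have h6 : (⟨P.1 ∪ {j}, by
        rw [Finset.card_union_of_disjoint (by simpa using hjP), P.2, Finset.card_singleton]⟩ : Idx (k+1))
        = ⟨insert j P.1, by rw [Finset.card_insert_of_notMem hjP, P.2]⟩ := Subtype.ext hun
    rw [h6]
lemma W1 {k : ℕ} (C : Matrix (Fin 9) (Fin 9) ℂ) (u : Lam k) (x : Lam 1) :
    wedge (act C u) (act C x) = act C (wedge u x) := by
  conv_lhs => rw [sum_bas u, sum_bas x]
  conv_rhs => rw [sum_bas u, sum_bas x]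
  simp only [act_sum, act_smul, wedge_sum_left, wedge_sum_right, wedge_smul_left,
    wedge_smul_right, Finset.smul_sum, smul_smul]
  refine Finset.sum_congr rfl fun T _ => Finset.sum_congr rfl fun S _ => ?_
  rw [W1_bas]

lemma wedge_bas_assoc {k l : ℕ} (S : Idx k) (T : Idx l) (R : Idx 1) :
    wedge (wedge (bas S) (bas T)) (bas R) = wedge (bas S) (wedge (bas T) (bas R)) := by
  classical
  rw [wedge_bas_bas S T, wedge_bas_bas T R]
  by_cases h1 : Disjoint S.1 T.1
  · rw [dif_pos h1]
    by_cases h2 : Disjoint T.1 R.1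
    · rw [dif_pos h2, wedge_smul_left, wedge_smul_right, wedge_bas_bas, wedge_bas_bas]
      by_cases h3 : Disjoint (S.1 ∪ T.1) R.1
      · have h3' := Finset.disjoint_union_left.1 h3
        have h4 : Disjoint S.1 (T.1 ∪ R.1) :=
          Finset.disjoint_union_right.2 ⟨h1, h3'.1⟩
        rw [dif_pos h3, dif_pos h4, smul_smul, smul_smul]
        have hidx : (⟨S.1 ∪ T.1 ∪ R.1, by
            rw [Finset.card_union_of_disjoint h3, Finset.card_union_of_disjoint h1, S.2, T.2, R.2]⟩ : Idx (k+l+1))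
            = ⟨S.1 ∪ (T.1 ∪ R.1), by
            rw [Finset.card_union_of_disjoint h4, Finset.card_union_of_disjoint h2, S.2, T.2, R.2]; omega⟩ :=
          Subtype.ext (Finset.union_assoc _ _ _)
        rw [hidx, sgn_union_left R.1 h1, sgn_union_right h2]
        ring_nf
      · have h4 : ¬ Disjoint S.1 (T.1 ∪ R.1) := by
          intro h4
          have h4' := Finset.disjoint_union_right.1 h4
          exact h3 (Finset.disjoint_union_left.2 ⟨h4'.2, h2⟩)
        rw [dif_neg h3, dif_neg h4, smul_zero, smul_zero]
    · rw [dif_neg h2, wedge_smul_left, wedge_zero_right, wedge_bas_bas]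
      have h3 : ¬ Disjoint (S.1 ∪ T.1) R.1 := fun h =>
        h2 (Finset.disjoint_union_left.1 h).2
      rw [dif_neg h3, smul_zero]
  · rw [dif_neg h1, wedge_zero_left]
    by_cases h2 : Disjoint T.1 R.1
    · rw [dif_pos h2, wedge_smul_right, wedge_bas_bas]
      have h4 : ¬ Disjoint S.1 (T.1 ∪ R.1) := fun h =>
        h1 (Finset.disjoint_union_right.1 h).1
      rw [dif_neg h4, smul_zero]
    · rw [dif_neg h2, wedge_zero_right]

lemma wedge_assoc {k l : ℕ} (u : Lam k) (v : Lam l) (x : Lam 1) :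
    wedge (wedge u v) x = wedge u (wedge v x) := by
  conv_lhs => rw [sum_bas u, sum_bas v, sum_bas x]
  conv_rhs => rw [sum_bas u, sum_bas v, sum_bas x]
  simp only [wedge_sum_left, wedge_sum_right, wedge_smul_left, wedge_smul_right,
    Finset.smul_sum, smul_smul, mul_assoc]
  refine Finset.sum_congr rfl fun S _ => Finset.sum_congr rfl fun T _ =>
    Finset.sum_congr rfl fun R _ => ?_
  rw [wedge_bas_assoc]

lemma bas_decomp {l : ℕ} (T : Idx (l+1)) (hne : T.1.Nonempty) :
    bas T = wedge
      (bas ⟨T.1.erase (T.1.max' hne), by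
        rw [Finset.card_erase_of_mem (T.1.max'_mem hne), T.2]; rfl⟩)
      (bas (⟨{T.1.max' hne}, Finset.card_singleton _⟩ : Idx 1)) := by
  rw [wedge_bas_bas, dif_pos (Finset.disjoint_singleton_right.2 (Finset.notMem_erase _ _))]
  rw [sgn_erase_max T.1 hne, one_smul]
  have hT : (⟨(⟨T.1.erase (T.1.max' hne), by
        rw [Finset.card_erase_of_mem (T.1.max'_mem hne), T.2]; rfl⟩ : Idx l).1 ∪
        (⟨{T.1.max' hne}, Finset.card_singleton _⟩ : Idx 1).1, by
      rw [Finset.card_union_of_disjoint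
        (Finset.disjoint_singleton_right.2 (Finset.notMem_erase _ _)),
        Finset.card_erase_of_mem (T.1.max'_mem hne), T.2, Finset.card_singleton]; omega⟩ : Idx (l+1)) = T := by
    apply Subtype.ext
    show T.1.erase (T.1.max' hne) ∪ {T.1.max' hne} = T.1
    rw [Finset.union_comm, ← Finset.insert_eq, Finset.insert_erase (T.1.max'_mem hne)]
  rw [hT]

lemma wedge_act (l : ℕ) : ∀ {k : ℕ} (C : Matrix (Fin 9) (Fin 9) ℂ) (u : Lam k) (v : Lam (l+1)),
    wedge (act C u) (act C v) = act C (wedge u v) := by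
  induction l with
  | zero => intro k C u v; exact W1 C u v
  | succ l ih =>
    intro k C u v
    conv_lhs => rw [sum_bas v]
    conv_rhs => rw [sum_bas v]
    simp only [act_sum, act_smul, wedge_sum_right, wedge_smul_right]
    refine Finset.sum_congr rfl fun T _ => ?_
    congr 1
    have hne : T.1.Nonempty := Finset.card_pos.1 (by rw [T.2]; omega)
    rw [bas_decomp T hne]
    have hc : (T.1.erase (T.1.max' hne)).card = l + 1 := by
      rw [Finset.card_erase_of_mem (T.1.max'_mem hne), T.2]; rfl
    calc wedge (act C u) (act C (wedge (bas ⟨T.1.erase (T.1.max' hne), hc⟩)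
          (bas ⟨{T.1.max' hne}, Finset.card_singleton _⟩)))
        = wedge (act C u) (wedge (act C (bas ⟨T.1.erase (T.1.max' hne), hc⟩))
            (act C (bas ⟨{T.1.max' hne}, Finset.card_singleton _⟩))) := by rw [W1]
      _ = wedge (wedge (act C u) (act C (bas ⟨T.1.erase (T.1.max' hne), hc⟩)))
            (act C (bas ⟨{T.1.max' hne}, Finset.card_singleton _⟩)) := (wedge_assoc _ _ _).symm
      _ = wedge (act C (wedge u (bas ⟨T.1.erase (T.1.max' hne), hc⟩)))
            (act C (bas ⟨{T.1.max' hne}, Finset.card_singleton _⟩)) := by rw [ih]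
      _ = act C (wedge (wedge u (bas ⟨T.1.erase (T.1.max' hne), hc⟩))
            (bas ⟨{T.1.max' hne}, Finset.card_singleton _⟩)) := W1 _ _ _
      _ = act C (wedge u (wedge (bas ⟨T.1.erase (T.1.max' hne), hc⟩)
            (bas ⟨{T.1.max' hne}, Finset.card_singleton _⟩))) := by rw [wedge_assoc]
def idx1 (i : Fin 9) : Idx 1 := ⟨{i}, Finset.card_singleton i⟩

lemma idx1_eq (s : Idx 1) : ∃ a, s = idx1 a := by
  obtain ⟨a, ha⟩ := Finset.card_eq_one.1 s.2
  exact ⟨a, Subtype.ext ha⟩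

def idx1Equiv : Fin 9 ≃ Idx 1 where
  toFun := idx1
  invFun s := en s 0
  left_inv i := en_singleton i _ 0
  right_inv s := by
    obtain ⟨a, rfl⟩ := idx1_eq s
    refine Subtype.ext ?_
    show ({en (idx1 a) 0} : Finset (Fin 9)) = {a}
    rw [show en (idx1 a) 0 = a from en_singleton a (Finset.card_singleton a) 0]

lemma sum_idx1 (f : Idx 1 → ℂ) : ∑ s : Idx 1, f s = ∑ i : Fin 9, f (idx1 i) :=
  (Equiv.sum_comp idx1Equiv f).symm

lemma act1_apply (C : Matrix (Fin 9) (Fin 9) ℂ) (x : Lam 1) (i : Fin 9) :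
    act C x (idx1 i) = ∑ j, C i j * x (idx1 j) := by
  rw [act, sum_idx1 (f := fun t => minor C (idx1 i) t * x t)]
  refine Finset.sum_congr rfl fun j _ => ?_
  rw [show minor C (idx1 i) (idx1 j) = C i j from minor_singleton C i j _ _]

lemma act_act1 (A B : Matrix (Fin 9) (Fin 9) ℂ) (x : Lam 1) :
    act A (act B x) = act (A * B) x := by
  funext s
  obtain ⟨a, rfl⟩ := idx1_eq s
  rw [act1_apply, act1_apply]
  simp only [act1_apply, Finset.mul_sum]
  rw [Finset.sum_comm]
  refine Finset.sum_congr rfl fun r _ => ?_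
  rw [Matrix.mul_apply, Finset.sum_mul]
  refine Finset.sum_congr rfl fun j _ => ?_
  ring

lemma act_act (l : ℕ) : ∀ (A B : Matrix (Fin 9) (Fin 9) ℂ) (u : Lam (l+1)),
    act A (act B u) = act (A * B) u := by
  induction l with
  | zero => exact act_act1
  | succ l ih =>
    intro A B u
    conv_lhs => rw [sum_bas u]
    conv_rhs => rw [sum_bas u]
    simp only [act_sum, act_smul]
    refine Finset.sum_congr rfl fun T _ => ?_
    congr 1
    have hne : T.1.Nonempty := Finset.card_pos.1 (by rw [T.2]; omega)
    obtain ⟨S, a, hd⟩ : ∃ (S : Idx (l+1)) (a : Idx 1), bas T = wedge (bas S) (bas a) :=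
      ⟨_, _, bas_decomp T hne⟩
    rw [hd]
    calc act A (act B (wedge (bas S) (bas a)))
        = act A (wedge (act B (bas S)) (act B (bas a))) := by rw [W1]
      _ = wedge (act A (act B (bas S))) (act A (act B (bas a))) := (W1 _ _ _).symm
      _ = wedge (act (A*B) (bas S)) (act (A*B) (bas a)) := by rw [ih, act_act1]
      _ = act (A*B) (wedge (bas S) (bas a)) := W1 _ _ _

lemma minor_one {k : ℕ} (s t : Idx k) :
    minor (1 : Matrix (Fin 9) (Fin 9) ℂ) s t = if s = t then 1 else 0 := by
  by_cases h : s = t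
  · subst h
    rw [if_pos rfl, minor]
    have h1 : (Matrix.of fun i j : Fin k =>
        (1 : Matrix (Fin 9) (Fin 9) ℂ) (s.1.orderIsoOfFin s.2 i) (s.1.orderIsoOfFin s.2 j))
        = (1 : Matrix (Fin k) (Fin k) ℂ) := by
      ext i j
      show (1 : Matrix (Fin 9) (Fin 9) ℂ) (en s i) (en s j) = _
      simp [Matrix.one_apply, (en_strictMono s).injective.eq_iff]
    rw [h1, Matrix.det_one]
  · rw [if_neg h, minor]
    have hex : ∃ a, a ∈ s.1 ∧ a ∉ t.1 := by
      by_contra hc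
      push_neg at hc
      have hsub : s.1 ⊆ t.1 := fun a ha => hc a ha
      exact h (Subtype.ext (Finset.eq_of_subset_of_card_le hsub (by rw [s.2, t.2])))
    obtain ⟨a, has, hat⟩ := hex
    obtain ⟨i, hi⟩ := en_surj s has
    apply Matrix.det_eq_zero_of_row_eq_zero i
    intro j
    show (1 : Matrix (Fin 9) (Fin 9) ℂ) (en s i) (en t j) = 0
    rw [Matrix.one_apply, if_neg]
    intro hc
    rw [hi] at hc
    exact hat (hc ▸ en_mem t j)

lemma act_one {k : ℕ} (u : Lam k) : act (1 : Matrix (Fin 9) (Fin 9) ℂ) u = u := by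
  funext s
  rw [act]
  simp [minor_one, ite_mul, Finset.sum_ite_eq]

lemma minor_transpose {k : ℕ} (C : Matrix (Fin 9) (Fin 9) ℂ) (s t : Idx k) :
    minor Cᵀ s t = minor C t s := by
  rw [minor, minor,
    ← Matrix.det_transpose (Matrix.of fun i j : Fin k => C (t.1.orderIsoOfFin t.2 i) (s.1.orderIsoOfFin s.2 j))]
  congr 1

lemma ip_act {k : ℕ} (C : Matrix (Fin 9) (Fin 9) ℂ) (x y : Lam k) :
    ip (act C x) y = ip x (act Cᵀ y) := by
  simp only [ip, act, Finset.sum_mul, Finset.mul_sum]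
  rw [Finset.sum_comm]
  refine Finset.sum_congr rfl fun s _ => Finset.sum_congr rfl fun t _ => ?_
  rw [minor_transpose]
  ring

lemma ip_ext {k : ℕ} (f g : Lam k) (h : ∀ w, ip f w = ip g w) : f = g := by
  funext s
  have h1 := h (bas s)
  simp only [ip, bas, mul_ite, mul_one, mul_zero, Finset.sum_ite_eq'] at h1
  simpa using h1

lemma ip_hstar_wedge {k l : ℕ} (h : k + l = 9) (u : Lam k) (w : Lam l)
    (W : Idx (k+l)) (hW : W.1 = Finset.univ) :
    wedge u w W = ip (hstar h u) w := by
  rw [wedge_apply, ip]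
  have hcompl : ∀ s : Idx k, (s.1ᶜ).card = l := fun s => by
    rw [Finset.card_compl, s.2]
    simp only [Fintype.card_fin]
    omega
  refine Fintype.sum_equiv
    (⟨fun s : Idx k => (⟨s.1ᶜ, hcompl s⟩ : Idx l),
      fun t : Idx l => ⟨t.1ᶜ, by rw [Finset.card_compl, t.2]; simp only [Fintype.card_fin]; omega⟩,
      fun s => Subtype.ext (by simp), fun t => Subtype.ext (by simp)⟩ : Idx k ≃ Idx l)
    _ _ (fun s => ?_)
  have hsub : s.1 ⊆ W.1 := by rw [hW]; exact Finset.subset_univ _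
  rw [dif_pos hsub]
  have hsd : W.1 \ s.1 = s.1ᶜ := by rw [hW, ← Finset.compl_eq_univ_sdiff]
  have h2 : (⟨W.1 \ s.1, by rw [Finset.card_sdiff_of_subset hsub, W.2, s.2]; omega⟩ : Idx l)
      = ⟨s.1ᶜ, hcompl s⟩ := Subtype.ext hsd
  rw [h2, hsd]
  show sgn s.1 s.1ᶜ * u s * w ⟨s.1ᶜ, hcompl s⟩
      = sgn (s.1ᶜ)ᶜ s.1ᶜ * u ⟨(s.1ᶜ)ᶜ, _⟩ * w ⟨s.1ᶜ, hcompl s⟩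
  have h3 : (⟨(s.1ᶜ)ᶜ, by rw [Finset.card_compl, hcompl s]; simp only [Fintype.card_fin]; omega⟩ : Idx k) = s :=
    Subtype.ext (by simp)
  rw [h3, compl_compl]

lemma act_univ_eval {n : ℕ} (hn : n = 9) (C : Matrix (Fin 9) (Fin 9) ℂ) (hC : C.det = 1)
    (ξ : Lam n) (W : Idx n) : act C ξ W = ξ W := by
  subst hn
  have hWu : ∀ t : Idx 9, t.1 = Finset.univ := fun t =>
    Finset.eq_univ_of_card t.1 (by rw [t.2]; simp)
  have huniq : ∀ t : Idx 9, t = W := fun t => Subtype.ext (by rw [hWu t, hWu W])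
  rw [act, Finset.sum_eq_single W (fun t _ ht => absurd (huniq t) ht)
    (fun h => absurd (Finset.mem_univ W) h)]
  have hen : en W = id := by
    rw [en_eq_orderEmbOfFin]
    have h4 := Finset.orderEmbOfFin_unique (f := fun i : Fin 9 => i) W.2
      (fun x => by rw [hWu W]; exact Finset.mem_univ x) strictMono_id
    exact h4.symm
  have h1 : (Matrix.of fun i j : Fin 9 =>
      C (W.1.orderIsoOfFin W.2 i) (W.1.orderIsoOfFin W.2 j)) = C := by
    ext i j
    show C (en W i) (en W j) = C i j
    rw [hen]
    rfl
  have hminor : minor C W W = 1 := by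
    rw [show minor C W W = C.det from congrArg Matrix.det h1, hC]
  rw [hminor, one_mul]

lemma hstar_act {k l' : ℕ} (h : k + (l'+1) = 9) (A : Matrix (Fin 9) (Fin 9) ℂ)
    (hA : A.det = 1) (z : Lam k) :
    hstar h (act A z) = act (Aᵀ)⁻¹ (hstar h z) := by
  have hAu : IsUnit A.det := by rw [hA]; exact isUnit_one
  apply ip_ext
  intro w
  set W : Idx (k + (l'+1)) := ⟨Finset.univ, by
    rw [Finset.card_univ]; simp only [Fintype.card_fin]; omega⟩ with hWdef
  have hw : act A (act A⁻¹ w) = w := by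
    rw [act_act l', Matrix.mul_nonsing_inv _ hAu, act_one]
  calc ip (hstar h (act A z)) w
      = wedge (act A z) w W := (ip_hstar_wedge h _ _ W rfl).symm
    _ = wedge (act A z) (act A (act A⁻¹ w)) W := by rw [hw]
    _ = act A (wedge z (act A⁻¹ w)) W := by rw [wedge_act l']
    _ = wedge z (act A⁻¹ w) W := act_univ_eval h A hA _ W
    _ = ip (hstar h z) (act A⁻¹ w) := ip_hstar_wedge h _ _ W rfl
    _ = ip (act (A⁻¹)ᵀ (hstar h z)) w := by
        rw [ip_act (A⁻¹)ᵀ, Matrix.transpose_transpose]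
    _ = ip (act (Aᵀ)⁻¹ (hstar h z)) w := by rw [Matrix.transpose_nonsing_inv]
lemma vec_apply (x : Fin 9 → ℂ) (i : Fin 9) : vec x (idx1 i) = x i := by
  simp [_root_.vec, idx1]

lemma vec_mulVec (A : Matrix (Fin 9) (Fin 9) ℂ) (y : Fin 9 → ℂ) :
    vec (A *ᵥ y) = act A (vec y) := by
  funext s
  obtain ⟨i, rfl⟩ := idx1_eq s
  rw [vec_apply, act1_apply]
  simp only [Matrix.mulVec, dotProduct]
  refine Finset.sum_congr rfl fun j _ => ?_
  rw [vec_apply]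

lemma unvec_mulVec (A : Matrix (Fin 9) (Fin 9) ℂ) (z : Lam 1) :
    unvec (act A z) = A *ᵥ unvec z := by
  funext i
  show act A z (idx1 i) = _
  rw [act1_apply]
  simp only [Matrix.mulVec, dotProduct]
  rfl

lemma hstar_sum {k l : ℕ} (h : k + l = 9) {ι : Type*} (I : Finset ι) (f : ι → Lam k) :
    hstar h (∑ m ∈ I, f m) = ∑ m ∈ I, hstar h (f m) := by
  funext t
  rw [Finset.sum_apply]
  simp only [hstar, Finset.sum_apply, Finset.mul_sum]

lemma hstar_smul {k l : ℕ} (h : k + l = 9) (c : ℂ) (f : Lam k) :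
    hstar h (c • f) = c • hstar h f := by
  funext t
  simp only [hstar, Pi.smul_apply, smul_eq_mul]
  ring

lemma star4_sum {ι : Type*} (I : Finset ι) (f : ι → Lam 4) :
    star4 (∑ m ∈ I, f m) = ∑ m ∈ I, star4 (f m) := hstar_sum _ I f
lemma star4_smul (c : ℂ) (f : Lam 4) : star4 (c • f) = c • star4 f := hstar_smul _ c f
lemma star8_sum {ι : Type*} (I : Finset ι) (f : ι → Lam 8) :
    star8 (∑ m ∈ I, f m) = ∑ m ∈ I, star8 (f m) := hstar_sum _ I f
lemma star8_smul (c : ℂ) (f : Lam 8) : star8 (c • f) = c • star8 f := hstar_smul _ c f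

lemma unvec_sum {ι : Type*} (I : Finset ι) (f : ι → Lam 1) :
    unvec (∑ m ∈ I, f m) = ∑ m ∈ I, unvec (f m) := by
  funext i
  rw [Finset.sum_apply]
  show (∑ m ∈ I, f m) (idx1 i) = _
  rw [Finset.sum_apply]
  rfl

lemma unvec_smul (c : ℂ) (f : Lam 1) : unvec (c • f) = c • unvec f := rfl

lemma crossApp_eq (u v : Lam 3) (y : Fin 9 → ℂ) :
    crossApp u v y =
      unvec (star8 (wedge v (star4 (wedge u (vec y))))) + ((2/3 : ℂ) * ip u v) • y := rfl

lemma crossApp_sum (u v : Lam 3) {ι : Type*} (I : Finset ι) (c : ι → ℂ) (g : ι → Fin 9 → ℂ) :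
    crossApp u v (∑ m ∈ I, c m • g m) = ∑ m ∈ I, c m • crossApp u v (g m) := by
  have hvec : vec (∑ m ∈ I, c m • g m) = ∑ m ∈ I, c m • vec (g m) := by
    funext s
    rw [Finset.sum_apply]
    simp only [_root_.vec, Finset.sum_apply, Pi.smul_apply, smul_eq_mul, Finset.mul_sum]
    rw [Finset.sum_comm]
  rw [crossApp_eq, hvec, wedge_sum_right]
  simp only [wedge_smul_right, star4_sum, star4_smul, wedge_smul_right, star8_smul]
  rw [wedge_sum_right]
  simp only [wedge_smul_right, star8_sum, star8_smul, unvec_sum, unvec_smul, Finset.smul_sum]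
  rw [← Finset.sum_add_distrib]
  refine Finset.sum_congr rfl fun m _ => ?_
  rw [crossApp_eq]
  rw [smul_add, smul_comm (c m) ((2/3 : ℂ) * ip u v) (g m)]

lemma crossMat_mulVec (u v : Lam 3) (y : Fin 9 → ℂ) :
    crossMat u v *ᵥ y = crossApp u v y := by
  have hy : y = ∑ j : Fin 9, y j • (fun l => if l = j then (1:ℂ) else 0) := by
    funext l
    rw [Finset.sum_apply]
    simp [Finset.sum_ite_eq']
  conv_rhs => rw [hy, crossApp_sum]
  funext i
  rw [Finset.sum_apply, Matrix.mulVec, dotProduct]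
  refine Finset.sum_congr rfl fun j _ => ?_
  rw [crossMat]
  simp only [Matrix.of_apply, Pi.smul_apply, smul_eq_mul]
  ring

lemma ip_invariant (A : Matrix (Fin 9) (Fin 9) ℂ) (hA : A.det = 1) (u v : Lam 3) :
    ip (act A u) (act (Aᵀ)⁻¹ v) = ip u v := by
  have hu : IsUnit Aᵀ.det := by rw [Matrix.det_transpose, hA]; exact isUnit_one
  rw [ip_act, act_act 2, Matrix.mul_nonsing_inv _ hu, act_one]

lemma cross_core (A : Matrix (Fin 9) (Fin 9) ℂ) (hA : A.det = 1) (u v : Lam 3)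
    (y : Fin 9 → ℂ) :
    crossApp (act A u) (act (Aᵀ)⁻¹ v) (A *ᵥ y) = A *ᵥ crossApp u v y := by
  have hu : IsUnit A.det := by rw [hA]; exact isUnit_one
  have hdetB : ((Aᵀ)⁻¹).det = 1 := by
    rw [Matrix.det_nonsing_inv, Matrix.det_transpose, hA, Ring.inverse_one]
  have hBT : ((Aᵀ)⁻¹)ᵀ = A⁻¹ := by
    rw [← Matrix.transpose_nonsing_inv, Matrix.transpose_transpose]
  have hBTinv : (((Aᵀ)⁻¹)ᵀ)⁻¹ = A := by
    rw [hBT, Matrix.nonsing_inv_nonsing_inv _ hu]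
  rw [crossApp_eq, crossApp_eq]
  rw [vec_mulVec, show wedge (act A u) (act A (vec y)) = act A (wedge u (vec y)) from W1 A u (vec y)]
  rw [show star4 (act A (wedge u (vec y))) = act (Aᵀ)⁻¹ (star4 (wedge u (vec y))) from
    hstar_act _ A hA _]
  rw [show wedge (act (Aᵀ)⁻¹ v) (act (Aᵀ)⁻¹ (star4 (wedge u (vec y))))
      = act (Aᵀ)⁻¹ (wedge v (star4 (wedge u (vec y)))) from wedge_act 4 (Aᵀ)⁻¹ v _]
  rw [show star8 (act (Aᵀ)⁻¹ (wedge v (star4 (wedge u (vec y)))))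
      = act (((Aᵀ)⁻¹)ᵀ)⁻¹ (star8 (wedge v (star4 (wedge u (vec y))))) from
    hstar_act _ (Aᵀ)⁻¹ hdetB _]
  rw [hBTinv, unvec_mulVec, ip_invariant A hA u v]
  rw [Matrix.mulVec_add, Matrix.mulVec_smul]

theorem stmt5' (A : Matrix (Fin 9) (Fin 9) ℂ) (hA : A.det = 1) (u v : Lam 3) :
    A * crossMat u v * A⁻¹ = crossMat (act A u) (act (Aᵀ)⁻¹ v) := by
  have hu : IsUnit A.det := by rw [hA]; exact isUnit_one
  have key : A * crossMat u v = crossMat (act A u) (act (Aᵀ)⁻¹ v) * A := by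
    ext i j
    set dj : Fin 9 → ℂ := fun l => if l = j then (1:ℂ) else 0 with hdj
    have hAd : A *ᵥ dj = fun m => A m j := by
      funext m
      rw [Matrix.mulVec, dotProduct]
      simp [hdj, mul_ite, Finset.sum_ite_eq']
    have h1 : (A * crossMat u v) i j = (A *ᵥ (crossApp u v dj)) i := by
      rw [Matrix.mul_apply, Matrix.mulVec, dotProduct]
      refine Finset.sum_congr rfl fun m _ => ?_
      rw [crossMat]
      rfl
    rw [h1, ← cross_core A hA u v dj, ← crossMat_mulVec, hAd]
    rw [Matrix.mul_apply, Matrix.mulVec, dotProduct]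
  calc A * crossMat u v * A⁻¹
      = crossMat (act A u) (act (Aᵀ)⁻¹ v) * A * A⁻¹ := by rw [key]
    _ = crossMat (act A u) (act (Aᵀ)⁻¹ v) * (A * A⁻¹) := by rw [Matrix.mul_assoc]
    _ = crossMat (act A u) (act (Aᵀ)⁻¹ v) := by
        rw [Matrix.mul_nonsing_inv _ hu, Matrix.mul_one]
/-- For `A ∈ SL(9,ℂ)`, `A ∘ (u × v) ∘ A⁻¹ = (Au) × ((Aᵀ)⁻¹v)`. -/
theorem stmt5 (A : Matrix (Fin 9) (Fin 9) ℂ) (hA : A.det = 1) (u v : Lam 3) :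
    A * crossMat u v * A⁻¹ = crossMat (act A u) (act (Aᵀ)⁻¹ v) :=
  stmt5' A hA u v

end
end
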